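/- The subshift S generated by the words w_n is minimal: for every word u in the language of S there exists N such that every word of length N in the language of S contains u as a subword. In fact, if u appears in w_n, then every word of length 2·|w_n| + 1 in the language contains u. -/

import Mathlib

inductive GLetter | a | B | C | D
deriving DecidableEq

def alphaN (n : ℕ) : GLetter :=
  if n % 3 = 0 then GLetter.B else if n % 3 = 1 then GLetter.D else GLetter.C

def w : ℕ → List GLetter
  | 0 => []
  | 1 => [GLetter.a]
  | (n+2) => w (n+1) ++ [alphaN (n+1)] ++ w (n+1)

/-- A word is in the language of the subshift `S` iff it is a subword of some `w n`. -/
def inLanguage (u : List GLetter) : Prop := ∃ n : ℕ, 1 ≤ n ∧ u <:+: w n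

lemma w_len_pos : ∀ n, 1 ≤ n → 0 < (w n).length := by
  intro n hn
  induction n with
  | zero => omega
  | succ k ih =>
    rcases Nat.eq_or_lt_of_le hn with h | h
    · simp [← h, w]
    · have hk : 1 ≤ k := by omega
      obtain ⟨k', rfl⟩ : ∃ k', k = k' + 1 := ⟨k - 1, by omega⟩
      have := ih hk
      simp [w, List.length_append]

lemma w_prefix_succ (n : ℕ) (hn : 1 ≤ n) : w n <+: w (n + 1) := by
  obtain ⟨k, rfl⟩ : ∃ k, n = k + 1 := ⟨n - 1, by omega⟩
  show w (k+1) <+: w (k+2)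
  rw [show w (k+2) = w (k+1) ++ [alphaN (k+1)] ++ w (k+1) from rfl]
  exact ⟨[alphaN (k+1)] ++ w (k+1), by simp⟩

lemma w_suffix_succ (n : ℕ) (hn : 1 ≤ n) : w n <:+ w (n + 1) := by
  obtain ⟨k, rfl⟩ : ∃ k, n = k + 1 := ⟨n - 1, by omega⟩
  show w (k+1) <:+ w (k+2)
  rw [show w (k+2) = w (k+1) ++ [alphaN (k+1)] ++ w (k+1) from rfl]
  exact ⟨w (k+1) ++ [alphaN (k+1)], by simp⟩

lemma w_prefix (n m : ℕ) (hn : 1 ≤ n) (hm : n ≤ m) : w n <+: w m := by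
  obtain ⟨d, rfl⟩ : ∃ d, m = n + d := ⟨m - n, by omega⟩
  clear hm
  induction d with
  | zero => exact List.prefix_rfl
  | succ e ih => exact ih.trans (w_prefix_succ (n + e) (by omega))

lemma w_suffix (n m : ℕ) (hn : 1 ≤ n) (hm : n ≤ m) : w n <:+ w m := by
  obtain ⟨d, rfl⟩ : ∃ d, m = n + d := ⟨m - n, by omega⟩
  clear hm
  induction d with
  | zero => exact List.suffix_rfl
  | succ e ih => exact ih.trans (w_suffix_succ (n + e) (by omega))

/-- Decomposition of an infix of an append. -/
lemma infix_append_decomp {α : Type*} {v x y : List α} (h : v <:+: x ++ y) :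
    v <:+: x ∨ v <:+: y ∨ ∃ s p, v = s ++ p ∧ s <:+ x ∧ p <+: y := by
  obtain ⟨a, b, hab⟩ := h
  rw [show a ++ v ++ b = (a ++ v) ++ b by simp] at hab
  rcases List.append_eq_append_iff.1 hab with ⟨a₂, hx, hb⟩ | ⟨c, hav, hy⟩
  · left
    exact ⟨a, a₂, by simp [hx]⟩
  · rcases List.append_eq_append_iff.1 hav with ⟨e, hx, hv⟩ | ⟨e, ha, hc⟩
    · right; right
      exact ⟨e, c, hv, ⟨a, hx.symm⟩, ⟨b, by rw [hy]⟩⟩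
    · right; left
      refine ⟨e, b, ?_⟩
      simp [hy, hc]

/-- Core: every sufficiently long word in the language contains `w n`. -/
lemma core (n : ℕ) (hn : 1 ≤ n) : ∀ m, ∀ v : List GLetter, v <:+: w m →
    2 * (w n).length + 1 ≤ v.length → w n <:+: v := by
  intro m
  induction m using Nat.strong_induction_on with
  | _ m ih =>
    intro v hv hlen
    set L := (w n).length with hL
    have hLpos : 0 < L := w_len_pos n hn
    -- m > n
    have hmn : n < m := by
      by_contra h
      push_neg at h
      have h1 := (w_prefix m n (by
        -- need 1 ≤ m; since v is long, w m is nonempty, so m ≥ 1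
        rcases Nat.eq_zero_or_pos m with rfl | hm
        · have h3 := hv.length_le
          rw [show (w 0).length = 0 from rfl] at h3
          omega
        · exact hm) h).length_le
      have h2 := hv.length_le
      omega
    obtain ⟨k, rfl⟩ : ∃ k, m = k + 2 := ⟨m - 2, by omega⟩
    have hk1 : 1 ≤ k + 1 := by omega
    have hnk : n ≤ k + 1 := by omega
    have hwn_pre : w n <+: w (k + 1) := w_prefix n (k+1) hn hnk
    have hwn_suf : w n <:+ w (k + 1) := w_suffix n (k+1) hn hnk
    rw [show w (k+2) = w (k+1) ++ [alphaN (k+1)] ++ w (k+1) from rfl,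
        List.append_assoc] at hv
    have prefCase : ∀ p : List GLetter, p <+: alphaN (k+1) :: w (k+1) →
        L + 1 ≤ p.length → w n <:+: p := by
      intro p hp hplen
      match p, hp, hplen with
      | q :: p', hp, hplen =>
        rw [List.cons_prefix_cons] at hp
        have hwp : w n <+: p' :=
          List.prefix_of_prefix_length_le hwn_pre hp.2 (by
            simp at hplen; omega)
        exact hwp.isInfix.trans ⟨[q], [], by simp⟩
    rcases infix_append_decomp hv with h1 | h2 | ⟨s, p, rfl, hs, hp⟩
    · exact ih (k+1) (by omega) v h1 hlen
    · rw [show [alphaN (k+1)] ++ w (k+1) = alphaN (k+1) :: w (k+1) by simp] at h2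
      rcases List.infix_cons_iff.1 h2 with hpre | hinf
      · exact prefCase v hpre (by omega)
      · exact ih (k+1) (by omega) v hinf hlen
    · by_cases hsl : L ≤ s.length
      · have : w n <:+ s := List.suffix_of_suffix_length_le hwn_suf hs hsl
        exact (this.isInfix).trans ⟨[], p, by simp⟩
      · have hplen : L + 1 ≤ p.length := by
          have := List.length_append (as := s) (bs := p)
          omega
        rw [show [alphaN (k+1)] ++ w (k+1) = alphaN (k+1) :: w (k+1) by simp] at hp
        exact (prefCase p hp hplen).trans ⟨s, [], by simp⟩

theorem stmt5 :
    (∀ u : List GLetter, inLanguage u →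
      ∃ N : ℕ, ∀ v : List GLetter, inLanguage v → v.length = N → u <:+: v) ∧
    (∀ n : ℕ, 1 ≤ n → ∀ u : List GLetter, u <:+: w n →
      ∀ v : List GLetter, inLanguage v → v.length = 2 * (w n).length + 1 → u <:+: v) := by
  constructor
  · intro u hu
    obtain ⟨n, hn, hun⟩ := hu
    refine ⟨2 * (w n).length + 1, fun v hv hvl => ?_⟩
    obtain ⟨m, hm, hvm⟩ := hv
    exact hun.trans (core n hn m v hvm (by omega))
  · intro n hn u hun v hv hvl
    obtain ⟨m, hm, hvm⟩ := hv
    exact hun.trans (core n hn m v hvm (by omega))
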